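/- Let K be a field, G a finite group, and C a nonzero right ideal of KG satisfying d(C) \cdot dim_K(C) = |G|. Then there exists a subgroup H of G and an element c \in KH (viewed inside KG) such that |H| = d(C), the right ideal c·KH of KH has K-dimension 1, and C = c·KG. -/

import Mathlib

open MonoidAlgebra

attribute [local instance] Classical.propDecidable

/-- Coefficientwise (Schur) product on the group algebra. -/
noncomputable def schur {K G : Type*} [Semiring K] (f g : MonoidAlgebra K G) :
    MonoidAlgebra K G :=
  MonoidAlgebra.ofCoeff (Finsupp.zipWith (· * ·) (mul_zero 0) f.coeff g.coeff)

/-- `C` is a right ideal of the group algebra. -/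
def IsRightIdeal {K G : Type*} [Field K] [Group G]
    (C : Submodule K (MonoidAlgebra K G)) : Prop :=
  ∀ c ∈ C, ∀ v : MonoidAlgebra K G, c * v ∈ C

/-- If `d(C) · dim C = |G|`, then `C = c·KG` for some `c` supported on a subgroup `H`
with `|H| = d(C)` and `dim_K (c·KH) = 1`. -/
noncomputable instance {K G : Type*} [Field K] [Group G] [Fintype G] :
    FiniteDimensional K (MonoidAlgebra K G) :=
  Module.Finite.equiv (MonoidAlgebra.coeffLinearEquiv K).symm

namespace Stmt4Aux
variable {K G : Type*} [Field K] [Group G]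

lemma mul_of_apply (f : MonoidAlgebra K G) (g x : G) :
    (f * MonoidAlgebra.of K G g).coeff x = f.coeff (x * g⁻¹) := by
  simp [MonoidAlgebra.of_apply, MonoidAlgebra.coeff_mul_single_apply]

lemma mul_of_ne_zero {f : MonoidAlgebra K G} (hf : f ≠ 0) (g : G) :
    f * MonoidAlgebra.of K G g ≠ 0 := by
  intro h
  apply hf
  have : f * MonoidAlgebra.of K G g * MonoidAlgebra.of K G g⁻¹ = 0 := by rw [h, zero_mul]
  rwa [mul_assoc, ← map_mul, mul_inv_cancel, map_one, mul_one] at this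

lemma card_support_mul_of (f : MonoidAlgebra K G) (g : G) :
    (f * MonoidAlgebra.of K G g).coeff.support.card = f.coeff.support.card := by
  classical
  apply Finset.card_bij (fun x _ => x * g⁻¹)
  · intro x hx
    simpa [Finsupp.mem_support_iff, mul_of_apply] using hx
  · intro a ha b hb h
    simpa using mul_right_cancel h
  · intro b hb
    refine ⟨b * g, ?_, by simp⟩
    simp only [Finsupp.mem_support_iff, mul_of_apply] at hb ⊢
    simpa using hb

/-- An "information set" of size ≤ finrank exists for any submodule of `G →₀ K`. -/
lemma exists_infoset {K G : Type*} [Field K] [Fintype G]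
    (m : ℕ) (D : Submodule K (MonoidAlgebra K G)) (hm : Module.finrank K D ≤ m) :
    ∃ U : Finset G, U.card ≤ m ∧ ∀ x ∈ D, (∀ u ∈ U, x.coeff u = 0) → x = 0 := by
  classical
  induction m generalizing D with
  | zero =>
    refine ⟨∅, le_rfl, fun x hx _ => ?_⟩
    by_contra hx0
    have h1 : Submodule.span K {x} ≤ D := by
      rw [Submodule.span_le, Set.singleton_subset_iff]; exact hx
    have := Submodule.finrank_mono h1
    rw [finrank_span_singleton hx0] at this
    omega
  | succ m ih =>
    by_cases hD : D = ⊥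
    · exact ⟨∅, by simp, fun x hx _ => by simpa [hD] using hx⟩
    · obtain ⟨x₀, hx₀D, hx₀⟩ := Submodule.ne_bot_iff D |>.mp hD
      obtain ⟨u, hu⟩ := Finsupp.support_nonempty_iff.mpr (MonoidAlgebra.coeff_eq_zero.not.mpr hx₀)
      set D' := D ⊓ LinearMap.ker ((Finsupp.lapply u (R := K)) ∘ₗ (MonoidAlgebra.coeffLinearEquiv K).toLinearMap) with hD'
      have hlt : D' < D := by
        refine lt_of_le_of_ne inf_le_left (fun h => ?_)
        have : x₀ ∈ D' := h ▸ hx₀D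
        rw [hD', Submodule.mem_inf, LinearMap.mem_ker] at this
        exact (Finsupp.mem_support_iff.mp hu) this.2
      have : Module.finrank K D' < Module.finrank K D :=
        Submodule.finrank_lt_finrank_of_lt hlt
      obtain ⟨U', hU'c, hU'⟩ := ih D' (by omega)
      refine ⟨insert u U', ?_, ?_⟩
      · exact (Finset.card_insert_le _ _).trans (by omega)
      · intro x hx hxv
        apply hU' x
        · rw [hD', Submodule.mem_inf, LinearMap.mem_ker]
          exact ⟨hx, hxv u (Finset.mem_insert_self _ _)⟩
        · exact fun v hv => hxv v (Finset.mem_insert_of_mem hv)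

end Stmt4Aux

theorem stmt4 {K G : Type*} [Field K] [Group G] [Fintype G]
    (C : Submodule K (MonoidAlgebra K G)) (hI : IsRightIdeal C) (hC : C ≠ ⊥)
    (d : ℕ) (hd : IsLeast {w | ∃ c ∈ C, c ≠ 0 ∧ c.coeff.support.card = w} d)
    (heq : d * Module.finrank K ↥C = Fintype.card G) :
    ∃ (H : Subgroup G) (c : MonoidAlgebra K G),
      (↑c.coeff.support ⊆ (H : Set G)) ∧ Nat.card H = d ∧
      Module.finrank K ↥(Submodule.span K {x : MonoidAlgebra K G |
        ∃ v : MonoidAlgebra K G, ↑v.coeff.support ⊆ (H : Set G) ∧ x = c * v}) = 1 ∧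
      C = LinearMap.range (LinearMap.mulLeft K c) := by
  classical
  obtain ⟨hdmem, hdlb⟩ := hd
  obtain ⟨c₀, hc₀C, hc₀0, hc₀d⟩ := hdmem
  set k := Module.finrank K ↥C with hkdef
  have hn : 0 < Fintype.card G := Fintype.card_pos
  have hdpos : 0 < d := by
    rw [← hc₀d]
    exact Finset.card_pos.mpr (Finsupp.support_nonempty_iff.mpr (MonoidAlgebra.coeff_eq_zero.not.mpr hc₀0))
  obtain ⟨U, hUcard, hUkill⟩ := Stmt4Aux.exists_infoset k C le_rfl
  -- covering property
  have hE : ∀ x ∈ C, x ≠ 0 → ∀ g : G, ∃ u ∈ U, x.coeff (u * g) ≠ 0 := by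
    intro x hxC hx0 g
    by_contra hcon; push_neg at hcon
    refine Stmt4Aux.mul_of_ne_zero hx0 g⁻¹ (hUkill _ (hI x hxC _) fun u hu => ?_)
    rw [Stmt4Aux.mul_of_apply]
    simpa using hcon u hu
  -- injectivity property for minimum weight codewords
  have hF : ∀ x ∈ C, x ≠ 0 → x.coeff.support.card = d →
      ∀ u ∈ U, ∀ v ∈ U, ∀ p ∈ x.coeff.support, ∀ q ∈ x.coeff.support,
        u⁻¹ * p = v⁻¹ * q → u = v ∧ p = q := by
    intro x hxC hx0 hxd u hu v hv p hp q hq hpq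
    have himg : (U ×ˢ x.coeff.support).image (fun pr : G × G => pr.1⁻¹ * pr.2) = Finset.univ := by
      refine Finset.eq_univ_iff_forall.mpr fun g => Finset.mem_image.mpr ?_
      obtain ⟨w, hw, hne⟩ := hE x hxC hx0 g
      exact ⟨(w, w * g), Finset.mem_product.mpr ⟨hw, Finsupp.mem_support_iff.mpr hne⟩,
        by group⟩
    have hcard : ((U ×ˢ x.coeff.support).image (fun pr : G × G => pr.1⁻¹ * pr.2)).card
        = (U ×ˢ x.coeff.support).card := by
      apply le_antisymm Finset.card_image_le
      rw [himg, Finset.card_univ]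
      calc (U ×ˢ x.coeff.support).card = U.card * d := by rw [Finset.card_product, hxd]
        _ ≤ k * d := Nat.mul_le_mul_right _ hUcard
        _ = Fintype.card G := by rw [Nat.mul_comm]; exact heq
    have hinj := Finset.injOn_of_card_image_eq hcard
    have := hinj (Finset.mem_coe.mpr (Finset.mem_product.mpr ⟨hu, hp⟩))
      (Finset.mem_coe.mpr (Finset.mem_product.mpr ⟨hv, hq⟩))
      (show (u, p).1⁻¹ * (u, p).2 = (v, q).1⁻¹ * (v, q).2 from hpq)
    exact ⟨congrArg Prod.fst this, congrArg Prod.snd this⟩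
  have hUne : U.Nonempty := by
    rcases Finset.eq_empty_or_nonempty U with h | h
    · exact absurd (hUkill c₀ hc₀C (by simp [h])) hc₀0
    · exact h
  obtain ⟨u₀, hu₀⟩ := hUne
  -- normalize the minimum weight codeword
  obtain ⟨s, hs⟩ := Finsupp.support_nonempty_iff.mpr (MonoidAlgebra.coeff_eq_zero.not.mpr hc₀0)
  set c : MonoidAlgebra K G := c₀ * MonoidAlgebra.of K G s⁻¹ with hcdef
  have hcC : c ∈ C := hI c₀ hc₀C _
  have hc0 : c ≠ 0 := Stmt4Aux.mul_of_ne_zero hc₀0 _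
  have hcd : c.coeff.support.card = d := by
    rw [hcdef, Stmt4Aux.card_support_mul_of, hc₀d]
  have hc1 : c.coeff 1 ≠ 0 := by
    rw [hcdef, Stmt4Aux.mul_of_apply]
    simpa using Finsupp.mem_support_iff.mp hs
  have h1S : (1:G) ∈ c.coeff.support := Finsupp.mem_support_iff.mpr hc1
  -- key step
  have hkey : ∀ h ∈ c.coeff.support, ∃ a : K, c * MonoidAlgebra.of K G h⁻¹ = a • c := by
    intro h hh
    set c' := c * MonoidAlgebra.of K G h⁻¹ with hc'def
    have hc'C : c' ∈ C := hI c hcC _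
    have hc'0 : c' ≠ 0 := Stmt4Aux.mul_of_ne_zero hc0 _
    have hc'd : c'.coeff.support.card = d := by
      rw [hc'def, Stmt4Aux.card_support_mul_of, hcd]
    have hc'1 : c'.coeff 1 = c.coeff h := by rw [hc'def, Stmt4Aux.mul_of_apply]; simp
    have h1S' : (1:G) ∈ c'.coeff.support := by
      rw [Finsupp.mem_support_iff, hc'1]; exact Finsupp.mem_support_iff.mp hh
    set z : MonoidAlgebra K G := (c.coeff 1) • c' - (c.coeff h) • c with hzdef
    have hzC : z ∈ C := C.sub_mem (C.smul_mem _ hc'C) (C.smul_mem _ hcC)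
    have hz1 : z.coeff 1 = 0 := by
      rw [hzdef, MonoidAlgebra.coeff_sub, Finsupp.sub_apply, MonoidAlgebra.coeff_smul_apply,
        MonoidAlgebra.coeff_smul_apply, hc'1]
      simp only [smul_eq_mul]
      ring
    have hzvan : ∀ u ∈ U, z.coeff (u * u₀⁻¹) = 0 := by
      intro u hu
      by_contra hzp
      have hne1 : u * u₀⁻¹ ≠ 1 := fun h' => hzp (by rw [h']; exact hz1)
      have hp : u * u₀⁻¹ ∈ c'.coeff.support ∨ u * u₀⁻¹ ∈ c.coeff.support := by
        by_contra hcon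
        push_neg at hcon
        obtain ⟨h1, h2⟩ := hcon
        rw [Finsupp.notMem_support_iff] at h1 h2
        apply hzp
        rw [hzdef, MonoidAlgebra.coeff_sub, Finsupp.sub_apply, MonoidAlgebra.coeff_smul_apply,
            MonoidAlgebra.coeff_smul_apply, h1, h2]
        simp
      rcases hp with hp | hp
      · exact hne1 (hF c' hc'C hc'0 hc'd u hu u₀ hu₀ _ hp 1 h1S' (by group)).2
      · exact hne1 (hF c hcC hc0 hcd u hu u₀ hu₀ _ hp 1 h1S (by group)).2
    have hz0 : z = 0 := by
      by_contra hz
      refine Stmt4Aux.mul_of_ne_zero hz u₀ (hUkill _ (hI z hzC _) fun u hu => ?_)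
      rw [Stmt4Aux.mul_of_apply]
      exact hzvan u hu
    have heqz : (c.coeff 1) • c' = (c.coeff h) • c := by
      rw [hzdef] at hz0
      exact sub_eq_zero.mp hz0
    refine ⟨(c.coeff 1)⁻¹ * c.coeff h, ?_⟩
    have := congrArg (fun w => (c.coeff 1)⁻¹ • w) heqz
    simpa [smul_smul, inv_mul_cancel₀ hc1] using this
  -- the subgroup
  set Hc : Subgroup G :=
    { carrier := {g : G | ∃ a : K, c * MonoidAlgebra.of K G g = a • c}
      one_mem' := ⟨1, by rw [map_one, mul_one, one_smul]⟩
      mul_mem' := by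
        rintro g₁ g₂ ⟨a₁, h₁⟩ ⟨a₂, h₂⟩
        exact ⟨a₁ * a₂, by
          rw [map_mul, ← mul_assoc, h₁, smul_mul_assoc, h₂, smul_smul]⟩
      inv_mem' := by
        rintro g ⟨a, ha⟩
        have ha0 : a ≠ 0 := by
          intro h0
          rw [h0, zero_smul] at ha
          exact Stmt4Aux.mul_of_ne_zero hc0 g ha
        refine ⟨a⁻¹, ?_⟩
        have hca : c = a • (c * MonoidAlgebra.of K G g⁻¹) := by
          have : c * MonoidAlgebra.of K G g * MonoidAlgebra.of K G g⁻¹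
              = (a • c) * MonoidAlgebra.of K G g⁻¹ := by rw [ha]
          rwa [mul_assoc, ← map_mul, mul_inv_cancel, map_one, mul_one,
            smul_mul_assoc] at this
        have h2 := congrArg (fun w => a⁻¹ • w) hca
        simp only [smul_smul, inv_mul_cancel₀ ha0, one_smul] at h2
        exact h2.symm } with hHdef
  have hHS : ∀ g ∈ Hc, g ∈ c.coeff.support := by
    intro g hg
    obtain ⟨a, ha⟩ := hg
    have h1 : (c * MonoidAlgebra.of K G g).coeff g = (a • c).coeff g := by rw [ha]
    rw [Stmt4Aux.mul_of_apply, mul_inv_cancel, MonoidAlgebra.coeff_smul_apply, smul_eq_mul] at h1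
    rw [Finsupp.mem_support_iff]
    intro hcg
    rw [hcg, mul_zero] at h1
    exact hc1 h1
  have hSH : ∀ h ∈ c.coeff.support, h ∈ Hc := by
    intro h hh
    obtain ⟨a, ha⟩ := hkey h hh
    have : h⁻¹ ∈ Hc := ⟨a, ha⟩
    simpa using Hc.inv_mem this
  have hsupH : (c.coeff.support : Set G) = (Hc : Set G) := by
    ext g
    exact ⟨fun hg => hSH g hg, fun hg => hHS g hg⟩
  have hHcard : Nat.card Hc = d := by
    have h1 : Nat.card (Hc : Set G) = d := by
      rw [← hsupH, Nat.card_coe_set_eq, Set.ncard_coe_finset, hcd]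
    exact h1
  -- the span is one-dimensional
  have hspan : Submodule.span K {x : MonoidAlgebra K G |
      ∃ v : MonoidAlgebra K G, ↑v.coeff.support ⊆ (Hc : Set G) ∧ x = c * v}
      = Submodule.span K {c} := by
    apply le_antisymm
    · rw [Submodule.span_le]
      rintro x ⟨v, hv, rfl⟩
      have hv' : v = ∑ h ∈ v.coeff.support, MonoidAlgebra.single h (v.coeff h) :=
        (MonoidAlgebra.sum_coeff_single v).symm
      rw [SetLike.mem_coe, hv', Finset.mul_sum]
      apply Submodule.sum_mem
      intro h hh
      obtain ⟨a, ha⟩ := hv (Finset.mem_coe.mpr hh)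
      have hsingle : MonoidAlgebra.single h (v.coeff h) = (v.coeff h) • MonoidAlgebra.of K G h := by
        rw [MonoidAlgebra.of_apply, MonoidAlgebra.smul_single', mul_one]
      rw [hsingle, mul_smul_comm, ha, smul_smul]
      exact Submodule.smul_mem _ _ (Submodule.mem_span_singleton_self c)
    · rw [Submodule.span_le, Set.singleton_subset_iff]
      refine Submodule.subset_span ⟨1, ?_, (mul_one c).symm⟩
      intro g hg
      have hg' : g ∈ ((1 : MonoidAlgebra K G).coeff.support : Set G) := hg
      rw [MonoidAlgebra.one_def, MonoidAlgebra.coeff_single] at hg'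
      have := Finsupp.support_single_subset (Finset.mem_coe.mp hg')
      rw [Finset.mem_singleton] at this
      exact this ▸ Hc.one_mem
  have hrank1 : Module.finrank K ↥(Submodule.span K {x : MonoidAlgebra K G |
      ∃ v : MonoidAlgebra K G, ↑v.coeff.support ⊆ (Hc : Set G) ∧ x = c * v}) = 1 := by
    rw [hspan]
    exact finrank_span_singleton hc0
  -- C = c·KG
  have hrange : LinearMap.range (LinearMap.mulLeft K c) ≤ C := by
    rintro x ⟨v, rfl⟩
    exact hI c hcC v
  set Q := Quotient (QuotientGroup.rightRel Hc) with hQdef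
  haveI : Fintype Q := Quotient.fintype _
  set f : Q → MonoidAlgebra K G := fun q => c * MonoidAlgebra.of K G q.out with hfdef
  have hfdiag : ∀ q : Q, (f q).coeff q.out = c.coeff 1 := by
    intro q
    rw [hfdef, Stmt4Aux.mul_of_apply, mul_inv_cancel]
  have hfoff : ∀ q q' : Q, (f q).coeff q'.out ≠ 0 → q = q' := by
    intro q q' hne
    rw [hfdef, Stmt4Aux.mul_of_apply] at hne
    have h1 : q'.out * q.out⁻¹ ∈ c.coeff.support := Finsupp.mem_support_iff.mpr hne
    have h2 : q'.out * q.out⁻¹ ∈ Hc := hSH _ h1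
    have h3 : (QuotientGroup.rightRel Hc) q.out q'.out :=
      QuotientGroup.rightRel_apply.mpr h2
    calc q = Quotient.mk _ q.out := (Quotient.out_eq q).symm
      _ = Quotient.mk _ q'.out := Quotient.sound h3
      _ = q' := Quotient.out_eq q'
  have hind : LinearIndependent K f := by
    rw [linearIndependent_iff']
    intro t a hsum i hi
    have h0 : (∑ j ∈ t, a j • f j).coeff i.out = 0 := by rw [hsum]; simp
    rw [MonoidAlgebra.coeff_sum, Finsupp.finset_sum_apply] at h0
    have h1 : ∑ j ∈ t, a j * (f j).coeff i.out = 0 := by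
      simpa [MonoidAlgebra.coeff_smul_apply, smul_eq_mul] using h0
    rw [Finset.sum_eq_single i] at h1
    · rw [hfdiag] at h1
      rcases mul_eq_zero.mp h1 with h | h
      exacts [h, absurd h hc1]
    · intro j hj hji
      rcases eq_or_ne ((f j).coeff i.out) 0 with h | h
      · rw [h, mul_zero]
      · exact absurd (hfoff j i h) hji
    · intro h; exact absurd hi h
  have hcardQ : Fintype.card Q = k := by
    have h1 : Nat.card Q = Hc.index := by
      rw [Subgroup.index]
      exact Nat.card_congr (QuotientGroup.quotientRightRelEquivQuotientLeftRel Hc)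
    have h2 : Nat.card Hc * Hc.index = Nat.card G := Subgroup.card_mul_index Hc
    rw [hHcard, Nat.card_eq_fintype_card] at h2
    rw [← heq] at h2
    have h3 : Hc.index = k := Nat.eq_of_mul_eq_mul_left hdpos h2
    rw [← Nat.card_eq_fintype_card, h1, h3]
  have hge : k ≤ Module.finrank K ↥(LinearMap.range (LinearMap.mulLeft K c)) := by
    have hf' : ∀ q, f q ∈ LinearMap.range (LinearMap.mulLeft K c) := by
      intro q
      exact ⟨MonoidAlgebra.of K G q.out, rfl⟩
    set f' : Q → ↥(LinearMap.range (LinearMap.mulLeft K c)) :=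
      fun q => ⟨f q, hf' q⟩ with hf'def
    have hind' : LinearIndependent K f' := by
      apply LinearIndependent.of_comp ((LinearMap.range (LinearMap.mulLeft K c)).subtype)
      exact hind
    have := hind'.fintype_card_le_finrank
    rwa [hcardQ] at this
  have hCeq : C = LinearMap.range (LinearMap.mulLeft K c) :=
    (Submodule.eq_of_le_of_finrank_le hrange hge).symm
  exact ⟨Hc, c, hsupH.subset, hHcard, hrank1, hCeq⟩
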